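/- Let 𝒞 be a covering of the finite set U and X ⊆ U. Then the lower approximation CL_𝒞(X) = ⋃{K ∈ 𝒞 : K ⊆ X} equals ⋃{K ∈ 𝒞 : K ⊆ X and K ∈ Md_𝒞(y) for some y ∈ U}; that is, every point covered by some block of 𝒞 contained in X is covered by a block contained in X that belongs to the minimal description of some point. -/

import Mathlib

/-- `𝒞` is a covering of `U`: a family of nonempty subsets of `U` whose union equals `U`. -/
def IsCovering {α : Type*} (U : Set α) (𝒞 : Set (Set α)) : Prop :=
  (∀ C ∈ 𝒞, C.Nonempty) ∧ ⋃₀ 𝒞 = U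

/-- The minimal description of `x`:
`Md_𝒞(x) = {K ∈ 𝒞 : x ∈ K ∧ ∀ S ∈ 𝒞, x ∈ S → S ⊆ K → S = K}`. -/
def Md {α : Type*} (𝒞 : Set (Set α)) (x : α) : Set (Set α) :=
  {K ∈ 𝒞 | x ∈ K ∧ ∀ S ∈ 𝒞, x ∈ S → S ⊆ K → S = K}

/-- for a covering `𝒞` of the finite set `U` and `X ⊆ U`, the lower
approximation `CL_𝒞(X) = ⋃{K ∈ 𝒞 : K ⊆ X}` equals
`⋃{K ∈ 𝒞 : K ⊆ X ∧ K ∈ Md_𝒞(y) for some y ∈ U}`. -/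
theorem stmt8 {α : Type*} (U : Set α) (hUfin : U.Finite)
    (𝒞 : Set (Set α)) (h𝒞 : IsCovering U 𝒞) (X : Set α) (hX : X ⊆ U) :
    ⋃₀ {K ∈ 𝒞 | K ⊆ X} = ⋃₀ {K ∈ 𝒞 | K ⊆ X ∧ ∃ y ∈ U, K ∈ Md 𝒞 y} := by
  apply Set.eq_of_subset_of_subset
  · rintro x ⟨K, ⟨hK𝒞, hKX⟩, hxK⟩
    -- the family of blocks containing x and contained in K
    set T : Set (Set α) := {S ∈ 𝒞 | x ∈ S ∧ S ⊆ K} with hT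
    have hTfin : T.Finite := by
      apply (hUfin.finite_subsets).subset
      rintro S ⟨hS𝒞, -, -⟩
      exact (h𝒞.2 ▸ Set.subset_sUnion_of_mem hS𝒞 : S ⊆ U)
    have hTne : T.Nonempty := ⟨K, hK𝒞, hxK, subset_rfl⟩
    obtain ⟨M, hMT, hMmin⟩ := hTfin.exists_minimal hTne
    obtain ⟨hM𝒞, hxM, hMK⟩ := hMT
    refine ⟨M, ⟨hM𝒞, hMK.trans hKX, x, hX (hKX hxK), hM𝒞, hxM, ?_⟩, hxM⟩
    intro S hS𝒞 hxS hSM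
    exact (hSM.antisymm (hMmin (y := S) ⟨hS𝒞, hxS, hSM.trans hMK⟩ hSM) : S = M)
  · rintro x ⟨K, ⟨hK𝒞, hKX, -⟩, hxK⟩
    exact ⟨K, ⟨hK𝒞, hKX⟩, hxK⟩
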